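/- Properties of the profile curve in the case B > 0: let τ > 0 and ϑ ∈ (0,π/2) with B = (τ²+1)cos²ϑ − 1 > 0; set α₁ = (τ·√B·cos ϑ + B)/τ, α₂ = (τ·√B·cos ϑ − B)/τ, g₁₁ = (√B − τ·cos ϑ)/(2√B), g₃₃ = (√B + τ·cos ϑ)/(2√B), and define γ : ℝ → ℝ⁴ by γ(u) = (√g₃₃·cos(α₂u), −√g₃₃·sin(α₂u), √(−g₁₁)·cos(α₁u), √(−g₁₁)·sin(α₁u)). Then for all u ∈ ℝ: ⟨γ(u),γ(u)⟩ = 1 (so γ lies in SL(2,ℝ)); ⟨γ'(u),J₁γ(u)⟩ = −τ⁻¹·sin²ϑ; ⟨γ'(u),γ'(u)⟩ = −τ⁻²·sin²ϑ·B; and, for the metric g_τ at p = γ(u), g_τ(γ'(u),γ'(u)) = sin²ϑ and g_τ(−τ⁻¹J₁γ(u), γ'(u)) = sin²ϑ. -/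

import Mathlib

noncomputable section

/-- The semi-definite inner product of signature (2,2) on ℝ⁴. -/
def ip (v w : Fin 4 → ℝ) : ℝ := v 0 * w 0 + v 1 * w 1 - v 2 * w 2 - v 3 * w 3

/-- The complex structure J₁ of ℝ⁴. -/
def J1 (v : Fin 4 → ℝ) : Fin 4 → ℝ := ![-v 1, v 0, -v 3, v 2]

/-- The metric g_τ at the point p of SL(2,ℝ), applied to vectors X, Y ∈ ℝ⁴. -/
def gtau (τ : ℝ) (p X Y : Fin 4 → ℝ) : ℝ :=
  -ip X Y + (1 + τ ^ 2) * ip X (J1 p) * ip Y (J1 p)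

theorem profile_curve_B_pos (τ ϑ B α₁ α₂ g₁₁ g₃₃ : ℝ)
    (hτ : 0 < τ) (hϑ : ϑ ∈ Set.Ioo 0 (Real.pi / 2))
    (hB : B = (τ ^ 2 + 1) * Real.cos ϑ ^ 2 - 1) (hBpos : 0 < B)
    (hα₁ : α₁ = (τ * Real.sqrt B * Real.cos ϑ + B) / τ)
    (hα₂ : α₂ = (τ * Real.sqrt B * Real.cos ϑ - B) / τ)
    (hg₁₁ : g₁₁ = (Real.sqrt B - τ * Real.cos ϑ) / (2 * Real.sqrt B))
    (hg₃₃ : g₃₃ = (Real.sqrt B + τ * Real.cos ϑ) / (2 * Real.sqrt B))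
    (γ : ℝ → Fin 4 → ℝ)
    (hγ : γ = fun s => ![Real.sqrt g₃₃ * Real.cos (α₂ * s),
                         -(Real.sqrt g₃₃ * Real.sin (α₂ * s)),
                         Real.sqrt (-g₁₁) * Real.cos (α₁ * s),
                         Real.sqrt (-g₁₁) * Real.sin (α₁ * s)]) :
    ∀ u : ℝ,
      ip (γ u) (γ u) = 1 ∧
      ip (deriv γ u) (J1 (γ u)) = -(Real.sin ϑ ^ 2) / τ ∧
      ip (deriv γ u) (deriv γ u) = -(Real.sin ϑ ^ 2 * B) / τ ^ 2 ∧
      gtau τ (γ u) (deriv γ u) (deriv γ u) = Real.sin ϑ ^ 2 ∧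
      gtau τ (γ u) (-τ⁻¹ • J1 (γ u)) (deriv γ u) = Real.sin ϑ ^ 2 := by
  obtain ⟨hϑ0, hϑ2⟩ := hϑ
  have hπ := Real.pi_pos
  have hc : 0 < Real.cos ϑ := Real.cos_pos_of_mem_Ioo ⟨by linarith, hϑ2⟩
  have hsc : Real.sin ϑ ^ 2 + Real.cos ϑ ^ 2 = 1 := Real.sin_sq_add_cos_sq ϑ
  have hB' : B = τ ^ 2 * Real.cos ϑ ^ 2 - Real.sin ϑ ^ 2 := by linear_combination hB + hsc
  have hsB : Real.sqrt B ^ 2 = B := Real.sq_sqrt hBpos.le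
  have hsBpos : 0 < Real.sqrt B := Real.sqrt_pos.2 hBpos
  have hspos : 0 < Real.sin ϑ := Real.sin_pos_of_pos_of_lt_pi hϑ0 (by linarith)
  have hlt : Real.sqrt B < τ * Real.cos ϑ :=
    (Real.sqrt_lt' (mul_pos hτ hc)).2 (by nlinarith)
  have hg33 : Real.sqrt g₃₃ ^ 2 = g₃₃ := Real.sq_sqrt (by
    rw [hg₃₃]; positivity)
  have hg11 : Real.sqrt (-g₁₁) ^ 2 = -g₁₁ := Real.sq_sqrt (by
    have : -g₁₁ = (τ * Real.cos ϑ - Real.sqrt B) / (2 * Real.sqrt B) := by rw [hg₁₁]; ring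
    rw [this]; apply div_nonneg (by linarith) (by positivity))
  -- key scalar identities
  have hτ' : τ ≠ 0 := ne_of_gt hτ
  have hsB' : Real.sqrt B ≠ 0 := ne_of_gt hsBpos
  have k1 : g₁₁ + g₃₃ = 1 := by
    rw [hg₁₁, hg₃₃]; field_simp; ring
  have hs2 : Real.sin ϑ ^ 2 = τ ^ 2 * Real.cos ϑ ^ 2 - Real.sqrt B ^ 2 := by
    rw [hsB]; linarith [hB']
  have k2 : g₁₁ * α₁ = -(Real.sin ϑ ^ 2) / (2 * τ) := by
    rw [hg₁₁, hα₁, hs2, ← hsB]; field_simp; linear_combination (Real.sqrt (Real.sqrt B ^ 2) + Real.sqrt B) * (τ * Real.cos ϑ - Real.sqrt (Real.sqrt B ^ 2)) * Real.sqrt_sq hsBpos.le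
  have k3 : g₃₃ * α₂ = Real.sin ϑ ^ 2 / (2 * τ) := by
    rw [hg₃₃, hα₂, hs2, ← hsB]; field_simp; linear_combination (Real.sqrt (Real.sqrt B ^ 2) + Real.sqrt B) * (Real.sqrt (Real.sqrt B ^ 2) + τ * Real.cos ϑ) * Real.sqrt_sq hsBpos.le
  have k4 : α₁ - α₂ = 2 * B / τ := by rw [hα₁, hα₂]; field_simp; ring
  intro u
  set A := Real.sqrt g₃₃ with hA
  set Q := Real.sqrt (-g₁₁) with hQ
  set C1 := Real.cos (α₁ * u) with hC1
  set S1 := Real.sin (α₁ * u) with hS1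
  set C2 := Real.cos (α₂ * u) with hC2
  set S2 := Real.sin (α₂ * u) with hS2
  have p1 : S1 ^ 2 + C1 ^ 2 = 1 := Real.sin_sq_add_cos_sq _
  have p2 : S2 ^ 2 + C2 ^ 2 = 1 := Real.sin_sq_add_cos_sq _
  have hd : HasDerivAt γ (![A * (-S2 * α₂), -(A * (C2 * α₂)), Q * (-S1 * α₁), Q * (C1 * α₁)]) u := by
    rw [hγ, hasDerivAt_pi]
    intro i
    fin_cases i
    · simpa [hC2, hS2, mul_comm] using (((hasDerivAt_id u).const_mul α₂).cos.const_mul A)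
    · simpa [hC2, hS2, mul_comm, Pi.neg_def] using (((hasDerivAt_id u).const_mul α₂).sin.const_mul A).neg
    · simpa [hC1, hS1, mul_comm] using (((hasDerivAt_id u).const_mul α₁).cos.const_mul Q)
    · simpa [hC1, hS1, mul_comm] using (((hasDerivAt_id u).const_mul α₁).sin.const_mul Q)
  have hD : deriv γ u = ![A * (-S2 * α₂), -(A * (C2 * α₂)), Q * (-S1 * α₁), Q * (C1 * α₁)] := hd.deriv
  have hγu : γ u = ![A * C2, -(A * S2), Q * C1, Q * S1] := by rw [hγ]
  have ipJ : ∀ v w : Fin 4 → ℝ, ip v (J1 w) = -(v 0 * w 1) + v 1 * w 0 + v 2 * w 3 - v 3 * w 2 := by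
    intro v w; simp [ip, J1]; try ring
  have L1 : ip (γ u) (γ u) = 1 := by
    simp only [hγu, ip, Matrix.cons_val_zero, Matrix.cons_val_one, Matrix.head_cons,
      Matrix.cons_val_two, Matrix.tail_cons, Matrix.cons_val_three]
    linear_combination (C2 ^ 2 + S2 ^ 2) * hg33 - (C1 ^ 2 + S1 ^ 2) * hg11 + g₃₃ * p2 + g₁₁ * p1 + k1
  have L2 : ip (deriv γ u) (J1 (γ u)) = -(Real.sin ϑ ^ 2) / τ := by
    rw [hD, hγu, ipJ]
    simp only [Matrix.cons_val_zero, Matrix.cons_val_one, Matrix.head_cons,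
      Matrix.cons_val_two, Matrix.tail_cons, Matrix.cons_val_three]
    linear_combination (-α₂ * (S2 ^ 2 + C2 ^ 2)) * hg33 + (-α₁ * (S1 ^ 2 + C1 ^ 2)) * hg11
      + (-α₂ * g₃₃) * p2 + (α₁ * g₁₁) * p1 - k3 + k2
  have L3 : ip (deriv γ u) (deriv γ u) = -(Real.sin ϑ ^ 2 * B) / τ ^ 2 := by
    rw [hD]
    simp only [ip, Matrix.cons_val_zero, Matrix.cons_val_one, Matrix.head_cons,
      Matrix.cons_val_two, Matrix.tail_cons, Matrix.cons_val_three]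
    linear_combination (α₂ ^ 2 * (S2 ^ 2 + C2 ^ 2)) * hg33 + (-(α₁ ^ 2) * (S1 ^ 2 + C1 ^ 2)) * hg11
      + (α₂ ^ 2 * g₃₃) * p2 + (α₁ ^ 2 * g₁₁) * p1
      + α₂ * k3 + α₁ * k2 + (-(Real.sin ϑ ^ 2) / (2 * τ)) * k4
  refine ⟨L1, L2, L3, ?_, ?_⟩
  · rw [gtau, L2, L3]
    field_simp
    linear_combination (τ ^ 2 * Real.sin ϑ ^ 2) * hB' + (τ ^ 4 * Real.sin ϑ ^ 2) * hsc + (1 - Real.sin ϑ ^ 2 * τ ^ 2) * hB' + ((1 - Real.sin ϑ ^ 2 * τ ^ 2) * τ ^ 2) * hsc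
  · have ipsmul : ip (-τ⁻¹ • J1 (γ u)) (deriv γ u) = -τ⁻¹ * ip (J1 (γ u)) (deriv γ u) := by
      simp [ip, Pi.smul_apply, smul_eq_mul]; ring
    have ipsmul2 : ip (-τ⁻¹ • J1 (γ u)) (J1 (γ u)) = -τ⁻¹ * ip (J1 (γ u)) (J1 (γ u)) := by
      simp [ip, Pi.smul_apply, smul_eq_mul]; ring
    have ipcomm : ip (J1 (γ u)) (deriv γ u) = ip (deriv γ u) (J1 (γ u)) := by
      simp [ip]; ring
    have ipJJ : ip (J1 (γ u)) (J1 (γ u)) = ip (γ u) (γ u) := by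
      simp [ip, J1]; ring
    rw [gtau, ipsmul, ipsmul2, ipcomm, ipJJ, L1, L2]
    field_simp
    ring
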